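/- Let N ≥ n_x be positive integers, A ∈ ℝ^{n_x×n_x}, B ∈ ℝ^{n_x×2}, let ξ ∈ ℝ² be a unit vector, 0 < γ < 1, 0 < ρ_min ≤ ρ_max. Let a, b ∈ ℝ² be the two distinct unit vectors with ⟪ξ, a⟫ = ⟪ξ, b⟫ = γ. Assume that for each w ∈ {a, b} and every choice of n_x distinct indices P₁, …, P_{n_x} ∈ {1, …, N}, the matrix [A^{N−P₁}Bw, …, A^{N−P_{n_x}}Bw] has rank n_x. Let η ∈ ℝ^{n_x} be nonzero, and let σ₁, …, σ_N ∈ [ρ_min, ρ_max] and u₁, …, u_N ∈ ℝ² satisfy, for every i ∈ {1, …, N}: uᵢ ∈ W(σᵢ) and −Bᵀ(Aᵀ)^{N−i}η ∈ N_{W(σᵢ)}(uᵢ). Then the number of indices i ∈ {1, …, N} at which it is NOT the case that (uᵢ = 0, or (ρ_min ≤ ‖uᵢ‖ ≤ ρ_max and ⟪ξ, uᵢ⟫ ≥ γ‖uᵢ‖)) is at most 2n_x − 2. -/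

import Mathlib

open RealInnerProductSpace Matrix

open scoped Classical

/-- Identification of a plain vector in `Fin n → ℝ` with a point of Euclidean space. -/
noncomputable def toE {n : ℕ} (v : Fin n → ℝ) : EuclideanSpace ℝ (Fin n) :=
  (EuclideanSpace.equiv (Fin n) ℝ).symm v

/-- The sector `W(σ) = {u ∈ ℝ² : ‖u‖ ≤ σ ∧ ⟪ξ, u⟫ ≥ γ‖u‖}`. -/
def sector (ξ : EuclideanSpace ℝ (Fin 2)) (γ σ : ℝ) :
    Set (EuclideanSpace ℝ (Fin 2)) :=
  {w : EuclideanSpace ℝ (Fin 2) | ‖w‖ ≤ σ ∧ γ * ‖w‖ ≤ ⟪ξ, w⟫}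

/-! ### Auxiliary lemmas -/

lemma euc2_inner (x y : EuclideanSpace ℝ (Fin 2)) :
    ⟪x, y⟫ = x 0 * y 0 + x 1 * y 1 := by
  simp [PiLp.inner_apply, Fin.sum_univ_two, RCLike.inner_apply]; ring

lemma euc2_ext {x y : EuclideanSpace ℝ (Fin 2)} (h0 : x 0 = y 0) (h1 : x 1 = y 1) : x = y := by
  ext i
  fin_cases i <;> assumption

/-- Two distinct unit vectors with equal inner product `γ` against `ξ` sum to `2γ • ξ`. -/
lemma sum_eq (γ : ℝ) (ξ x y : EuclideanSpace ℝ (Fin 2)) (hξ : ‖ξ‖ = 1)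
    (hx : ‖x‖ = 1) (hy : ‖y‖ = 1) (hxξ : ⟪ξ, x⟫ = γ) (hyξ : ⟪ξ, y⟫ = γ)
    (hxy : x ≠ y) : x + y = (2 * γ) • ξ := by
  have hξ2 : ξ 0 ^ 2 + ξ 1 ^ 2 = 1 := by
    have := real_inner_self_eq_norm_sq ξ
    rw [hξ, euc2_inner] at this; nlinarith
  have hx2 : x 0 ^ 2 + x 1 ^ 2 = 1 := by
    have := real_inner_self_eq_norm_sq x
    rw [hx, euc2_inner] at this; nlinarith
  have hy2 : y 0 ^ 2 + y 1 ^ 2 = 1 := by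
    have := real_inner_self_eq_norm_sq y
    rw [hy, euc2_inner] at this; nlinarith
  rw [euc2_inner] at hxξ hyξ
  have h1 : ξ 0 * (x 0 - y 0) + ξ 1 * (x 1 - y 1) = 0 := by linarith
  have h2 : (x 0 + y 0) * (x 0 - y 0) + (x 1 + y 1) * (x 1 - y 1) = 0 := by nlinarith
  have hv : x 0 - y 0 ≠ 0 ∨ x 1 - y 1 ≠ 0 := by
    by_contra h
    push_neg at h
    exact hxy (euc2_ext (by linarith [h.1]) (by linarith [h.2]))
  have hcross : ξ 0 * (x 1 + y 1) = ξ 1 * (x 0 + y 0) := by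
    rcases hv with hv | hv
    · have : (ξ 0 * (x 1 + y 1) - ξ 1 * (x 0 + y 0)) * (x 0 - y 0) = 0 := by
        linear_combination (x 1 + y 1) * h1 - ξ 1 * h2
      rcases mul_eq_zero.mp this with h | h
      · linarith
      · exact absurd h hv
    · have : (ξ 0 * (x 1 + y 1) - ξ 1 * (x 0 + y 0)) * (x 1 - y 1) = 0 := by
        linear_combination ξ 0 * h2 - (x 0 + y 0) * h1
      rcases mul_eq_zero.mp this with h | h
      · linarith
      · exact absurd h hv
  have hsum : ξ 0 * (x 0 + y 0) + ξ 1 * (x 1 + y 1) = 2 * γ := by linarith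
  apply euc2_ext
  · show x 0 + y 0 = (2 * γ) * ξ 0
    linear_combination (-(x 0 + y 0)) * hξ2 + ξ 0 * hsum + (-(ξ 1)) * hcross
  · show x 1 + y 1 = (2 * γ) * ξ 1
    linear_combination (-(x 1 + y 1)) * hξ2 + ξ 1 * hsum + ξ 0 * hcross

/-- In `ℝ²` there are at most two unit vectors with a given inner product against `ξ`. -/
lemma two_solutions (γ : ℝ) (ξ a b x : EuclideanSpace ℝ (Fin 2)) (hξ : ‖ξ‖ = 1)
    (hab : a ≠ b) (ha : ‖a‖ = 1) (hb : ‖b‖ = 1) (hx : ‖x‖ = 1)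
    (haξ : ⟪ξ, a⟫ = γ) (hbξ : ⟪ξ, b⟫ = γ) (hxξ : ⟪ξ, x⟫ = γ) : x = a ∨ x = b := by
  by_contra h
  push_neg at h
  have h1 := sum_eq γ ξ x a hξ hx ha hxξ haξ h.1
  have h2 := sum_eq γ ξ x b hξ hx hb hxξ hbξ h.2
  exact hab (add_left_cancel (h1.trans h2.symm))

lemma bridge {nx : ℕ} (A : Matrix (Fin nx) (Fin nx) ℝ) (B : Matrix (Fin nx) (Fin 2) ℝ)
    (η : Fin nx → ℝ) (k : ℕ) (w : EuclideanSpace ℝ (Fin 2)) :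
    ⟪toE ((Bᵀ * (Aᵀ) ^ k) *ᵥ η), w⟫ = η ⬝ᵥ ((A ^ k) *ᵥ (B *ᵥ fun t => w t)) := by
  have h1 : Bᵀ * (Aᵀ) ^ k = (A ^ k * B)ᵀ := by
    rw [Matrix.transpose_mul, Matrix.transpose_pow]
  rw [h1, Matrix.mulVec_transpose, Matrix.mulVec_mulVec]
  have : ⟪toE (η ᵥ* (A ^ k * B)), w⟫ = ∑ t, (η ᵥ* (A ^ k * B)) t * w t := by
    simp [toE, PiLp.inner_apply, RCLike.inner_apply]; ring
  rw [this, Matrix.dotProduct_mulVec]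
  simp [dotProduct]

lemma card_bound {nx N : ℕ} (hnx : 0 < nx)
    (A : Matrix (Fin nx) (Fin nx) ℝ) (B : Matrix (Fin nx) (Fin 2) ℝ)
    (w : EuclideanSpace ℝ (Fin 2))
    (hrk : ∀ P : Fin nx → ℕ, (∀ j, P j ∈ Finset.Icc 1 N) → Function.Injective P →
        (Matrix.of fun r (j : Fin nx) =>
          ((A ^ (N - P j)) *ᵥ (B *ᵥ fun t => w t)) r).rank = nx)
    (η : Fin nx → ℝ) (hη : η ≠ 0) :
    (((Finset.Icc 1 N)).filter
      (fun i => η ⬝ᵥ ((A ^ (N - i)) *ᵥ (B *ᵥ fun t => w t)) = 0)).card ≤ nx - 1 := by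
  by_contra hc
  push_neg at hc
  have hc' : nx ≤ (((Finset.Icc 1 N)).filter
      (fun i => η ⬝ᵥ ((A ^ (N - i)) *ᵥ (B *ᵥ fun t => w t)) = 0)).card := by omega
  obtain ⟨T, hTsub, hTcard⟩ := Finset.exists_subset_card_eq hc'
  let e := T.equivFinOfCardEq hTcard
  set P : Fin nx → ℕ := fun j => (e.symm j : ℕ) with hP
  have hPmem : ∀ j, P j ∈ T := fun j => (e.symm j).2
  have hPinj : Function.Injective P :=
    Subtype.coe_injective.comp e.symm.injective
  have hPIcc : ∀ j, P j ∈ Finset.Icc 1 N := fun j =>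
    Finset.mem_of_mem_filter _ (hTsub (hPmem j))
  set M := (Matrix.of fun r (j : Fin nx) =>
      ((A ^ (N - P j)) *ᵥ (B *ᵥ fun t => w t)) r) with hM
  have hMrank : M.rank = nx := hrk P hPIcc hPinj
  have hdot : ∀ j, η ⬝ᵥ (fun r => M r j) = 0 := by
    intro j
    have := (Finset.mem_filter.mp (hTsub (hPmem j))).2
    simpa [hM] using this
  have hmv : Mᵀ *ᵥ η = 0 := by
    funext j
    have := hdot j
    simp only [Matrix.mulVec, dotProduct, Matrix.transpose_apply] at *
    simpa [mul_comm] using this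
  have hrkT : (Mᵀ).rank = nx := by rw [Matrix.rank_transpose]; exact hMrank
  have hrange : LinearMap.range (Mᵀ).mulVecLin = ⊤ := by
    apply Submodule.eq_top_of_finrank_eq
    rw [← Matrix.rank, hrkT]
    simp
  have hsurj : Function.Surjective (Mᵀ).mulVecLin := by
    rw [← LinearMap.range_eq_top]; exact hrange
  have hinj : Function.Injective (Mᵀ).mulVecLin :=
    (LinearMap.injective_iff_surjective).mpr hsurj
  have : η = 0 := by
    apply hinj
    rw [map_zero, Matrix.mulVecLin_apply, hmv]
  exact hη this

lemma nc_reform {ξ : EuclideanSpace ℝ (Fin 2)} {γ s : ℝ} {q u : EuclideanSpace ℝ (Fin 2)}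
    (hnc : ∀ y ∈ sector ξ γ s, ⟪-q, y - u⟫ ≤ 0) :
    ∀ y ∈ sector ξ γ s, ⟪q, u⟫ ≤ ⟪q, y⟫ := by
  intro y hy
  have := hnc y hy
  rw [inner_neg_left, inner_sub_right] at this
  linarith

lemma inner_qu_zero {ξ : EuclideanSpace ℝ (Fin 2)} {γ s : ℝ} (hγ0 : 0 < γ) (hs : 0 < s)
    {q u : EuclideanSpace ℝ (Fin 2)} (hu : u ∈ sector ξ γ s) (h0 : u ≠ 0) (hlt : ‖u‖ < s)
    (hnc : ∀ y ∈ sector ξ γ s, ⟪-q, y - u⟫ ≤ 0) : ⟪q, u⟫ = 0 := by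
  have hnc' := nc_reform hnc
  have hun : 0 < ‖u‖ := norm_pos_iff.mpr h0
  have h1 : ⟪q, u⟫ ≤ 0 := by
    have h0mem : (0 : EuclideanSpace ℝ (Fin 2)) ∈ sector ξ γ s := by
      constructor <;> simp [hs.le]
    have := hnc' 0 h0mem
    rwa [inner_zero_right] at this
  have h2 : 0 ≤ ⟪q, u⟫ := by
    set c : ℝ := s / ‖u‖ with hc
    have hc1 : 1 < c := (one_lt_div hun).mpr hlt
    have hymem : c • u ∈ sector ξ γ s := by
      constructor
      · rw [norm_smul, Real.norm_eq_abs, abs_of_pos (by linarith)]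
        rw [hc, div_mul_cancel₀ _ hun.ne']
      · rw [norm_smul, Real.norm_eq_abs, abs_of_pos (by linarith), real_inner_smul_right]
        have := hu.2
        nlinarith
    have := hnc' _ hymem
    rw [real_inner_smul_right] at this
    nlinarith
  linarith

lemma q_zero_of_strict {ξ : EuclideanSpace ℝ (Fin 2)} {γ s : ℝ} (hγ0 : 0 < γ) (hξ : ‖ξ‖ = 1)
    {q u : EuclideanSpace ℝ (Fin 2)} (hu : u ∈ sector ξ γ s) (hlt : ‖u‖ < s)
    (hstrict : γ * ‖u‖ < ⟪ξ, u⟫)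
    (hnc : ∀ y ∈ sector ξ γ s, ⟪-q, y - u⟫ ≤ 0) : q = 0 := by
  have hnc' := nc_reform hnc
  by_contra hq
  have hqn : 0 < ‖q‖ := norm_pos_iff.mpr hq
  set δ : ℝ := ⟪ξ, u⟫ - γ * ‖u‖ with hδ
  have hδ0 : 0 < δ := by rw [hδ]; linarith
  set ε : ℝ := min ((s - ‖u‖) / ‖q‖) (δ / ((γ + 1) * ‖q‖)) with hε
  have hε0 : 0 < ε := lt_min (div_pos (by linarith) hqn)
    (div_pos hδ0 (mul_pos (by linarith) hqn))
  have hεq1 : ε * ‖q‖ ≤ s - ‖u‖ := by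
    rw [← div_mul_cancel₀ (s - ‖u‖) hqn.ne']
    exact mul_le_mul_of_nonneg_right (min_le_left _ _) hqn.le
  have hεq2 : (γ + 1) * (ε * ‖q‖) ≤ δ := by
    have : ε ≤ δ / ((γ + 1) * ‖q‖) := min_le_right _ _
    have h2 : ε * ((γ + 1) * ‖q‖) ≤ δ := by
      rw [← div_mul_cancel₀ δ (mul_pos (show (0:ℝ) < γ + 1 by linarith) hqn).ne']
      exact mul_le_mul_of_nonneg_right this (by positivity)
    linarith [h2, mul_comm ε ((γ + 1) * ‖q‖)]
  have hymem : u - ε • q ∈ sector ξ γ s := by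
    constructor
    · calc ‖u - ε • q‖ ≤ ‖u‖ + ‖ε • q‖ := norm_sub_le _ _
        _ = ‖u‖ + ε * ‖q‖ := by rw [norm_smul, Real.norm_eq_abs, abs_of_pos hε0]
        _ ≤ s := by linarith
    · have hn : ‖u - ε • q‖ ≤ ‖u‖ + ε * ‖q‖ := by
        calc ‖u - ε • q‖ ≤ ‖u‖ + ‖ε • q‖ := norm_sub_le _ _
          _ = ‖u‖ + ε * ‖q‖ := by rw [norm_smul, Real.norm_eq_abs, abs_of_pos hε0]
      have hiq : ⟪ξ, q⟫ ≤ ‖q‖ := by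
        have := real_inner_le_norm ξ q
        rwa [hξ, one_mul] at this
      rw [inner_sub_right, real_inner_smul_right]
      have : γ * ‖u - ε • q‖ ≤ γ * (‖u‖ + ε * ‖q‖) := by nlinarith
      nlinarith
  have := hnc' _ hymem
  rw [inner_sub_right, real_inner_smul_right, real_inner_self_eq_norm_sq] at this
  nlinarith [mul_pos hε0 (pow_pos hqn 2)]

/-- under the strengthened controllability condition for both edge directions
`a, b` of the sector, the number of time grid points `i ∈ {1, …, N}` at which it is not the
case that `uᵢ = 0` or (`ρmin ≤ ‖uᵢ‖ ≤ ρmax` and `⟪ξ, uᵢ⟫ ≥ γ‖uᵢ‖`) is at most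
`2n_x − 2`, provided `uᵢ ∈ W(σᵢ)` and `−Bᵀ(Aᵀ)^{N−i}η ∈ N_{W(σᵢ)}(uᵢ)` for each `i`. -/
theorem stmt_13 (nx N : ℕ) (hnx : 0 < nx) (hN : nx ≤ N)
    (A : Matrix (Fin nx) (Fin nx) ℝ) (B : Matrix (Fin nx) (Fin 2) ℝ)
    (ξ : EuclideanSpace ℝ (Fin 2)) (hξ : ‖ξ‖ = 1)
    (γ ρmin ρmax : ℝ) (hγ0 : 0 < γ) (hγ1 : γ < 1) (hρ0 : 0 < ρmin) (hρ : ρmin ≤ ρmax)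
    (a b : EuclideanSpace ℝ (Fin 2)) (hab : a ≠ b)
    (ha : ‖a‖ = 1) (hb : ‖b‖ = 1) (haξ : ⟪ξ, a⟫ = γ) (hbξ : ⟪ξ, b⟫ = γ)
    (hrank : ∀ w ∈ ({a, b} : Set (EuclideanSpace ℝ (Fin 2))),
      ∀ P : Fin nx → ℕ, (∀ j, P j ∈ Finset.Icc 1 N) → Function.Injective P →
        (Matrix.of fun r (j : Fin nx) =>
          ((A ^ (N - P j)) *ᵥ (B *ᵥ fun t => w t)) r).rank = nx)
    (η : Fin nx → ℝ) (hη : η ≠ 0)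
    (σ : ℕ → ℝ) (u : ℕ → EuclideanSpace ℝ (Fin 2))
    (hσ : ∀ i ∈ Finset.Icc 1 N, σ i ∈ Set.Icc ρmin ρmax)
    (hu : ∀ i ∈ Finset.Icc 1 N, u i ∈ sector ξ γ (σ i))
    (hnc : ∀ i ∈ Finset.Icc 1 N, ∀ y ∈ sector ξ γ (σ i),
      ⟪-toE ((Bᵀ * (Aᵀ) ^ (N - i)) *ᵥ η), y - u i⟫ ≤ 0) :
    ((Finset.Icc 1 N).filter fun i =>
      ¬(u i = 0 ∨ (ρmin ≤ ‖u i‖ ∧ ‖u i‖ ≤ ρmax ∧ γ * ‖u i‖ ≤ ⟪ξ, u i⟫))).card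
      ≤ 2 * nx - 2 := by
  classical
  set S : EuclideanSpace ℝ (Fin 2) → Finset ℕ := fun w =>
    (Finset.Icc 1 N).filter
      (fun i => η ⬝ᵥ ((A ^ (N - i)) *ᵥ (B *ᵥ fun t => w t)) = 0) with hS
  have hSa : (S a).card ≤ nx - 1 :=
    card_bound hnx A B a (hrank a (by simp)) η hη
  have hSb : (S b).card ≤ nx - 1 :=
    card_bound hnx A B b (hrank b (by simp)) η hη
  have hsub : ((Finset.Icc 1 N).filter fun i =>
      ¬(u i = 0 ∨ (ρmin ≤ ‖u i‖ ∧ ‖u i‖ ≤ ρmax ∧ γ * ‖u i‖ ≤ ⟪ξ, u i⟫))) ⊆ S a ∪ S b := by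
    intro i hi
    rw [Finset.mem_filter] at hi
    obtain ⟨hiI, hbad⟩ := hi
    rw [not_or] at hbad
    obtain ⟨h0, h2⟩ := hbad
    obtain ⟨hule, huin⟩ := hu i hiI
    obtain ⟨hσ1, hσ2⟩ := hσ i hiI
    have hltρ : ‖u i‖ < ρmin := by
      by_contra hcon
      push_neg at hcon
      exact h2 ⟨hcon, le_trans hule hσ2, huin⟩
    have hlt : ‖u i‖ < σ i := lt_of_lt_of_le hltρ hσ1
    have hσpos : 0 < σ i := lt_of_lt_of_le hρ0 hσ1
    set q : EuclideanSpace ℝ (Fin 2) := toE ((Bᵀ * (Aᵀ) ^ (N - i)) *ᵥ η) with hqdef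
    have hnci : ∀ y ∈ sector ξ γ (σ i), ⟪-q, y - u i⟫ ≤ 0 := hnc i hiI
    have hqu : ⟪q, u i⟫ = 0 := inner_qu_zero hγ0 hσpos ⟨hule, huin⟩ h0 hlt hnci
    have key : ⟪q, a⟫ = 0 ∨ ⟪q, b⟫ = 0 := by
      rcases eq_or_lt_of_le huin with heq | hstrict
      · have hun : 0 < ‖u i‖ := norm_pos_iff.mpr h0
        set x : EuclideanSpace ℝ (Fin 2) := ‖u i‖⁻¹ • u i with hx
        have hxnorm : ‖x‖ = 1 := by
          rw [hx, norm_smul, Real.norm_eq_abs, abs_of_pos (inv_pos.mpr hun),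
            inv_mul_cancel₀ hun.ne']
        have hxξ : ⟪ξ, x⟫ = γ := by
          rw [hx, real_inner_smul_right, ← heq]
          field_simp
        rcases two_solutions γ ξ a b x hξ hab ha hb hxnorm haξ hbξ hxξ with hxa | hxb
        · left
          rw [← hxa, hx, real_inner_smul_right, hqu, mul_zero]
        · right
          rw [← hxb, hx, real_inner_smul_right, hqu, mul_zero]
      · left
        have hq0 := q_zero_of_strict hγ0 hξ ⟨hule, huin⟩ hlt hstrict hnci
        rw [hq0, inner_zero_left]
    rcases key with hqa | hqb
    · apply Finset.mem_union_left
      rw [hS, Finset.mem_filter]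
      exact ⟨hiI, by rw [← bridge A B η (N - i) a]; exact hqa⟩
    · apply Finset.mem_union_right
      rw [hS, Finset.mem_filter]
      exact ⟨hiI, by rw [← bridge A B η (N - i) b]; exact hqb⟩
  calc ((Finset.Icc 1 N).filter fun i =>
      ¬(u i = 0 ∨ (ρmin ≤ ‖u i‖ ∧ ‖u i‖ ≤ ρmax ∧ γ * ‖u i‖ ≤ ⟪ξ, u i⟫))).card
      ≤ (S a ∪ S b).card := Finset.card_le_card hsub
    _ ≤ (S a).card + (S b).card := Finset.card_union_le _ _
    _ ≤ 2 * nx - 2 := by omega
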